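/- Let V be a finite-dimensional ℂ-vector space, let W : ℤ → Submodule ℂ V be monotone (increasing) with W n = ⊥ for all sufficiently small n and W n = ⊤ for all sufficiently large n, and let F : ℤ → Submodule ℂ V be antitone (decreasing) with F n = ⊤ for all sufficiently small n and F n = ⊥ for all sufficiently large n. Then the following are equivalent: (1) for every p ∈ ℤ the composite of the inclusion F p ⊓ W p → W p with the quotient map W p → W p ⧸ W (p−1) is a linear isomorphism; (2) for every p ∈ ℤ the composite of the inclusion F p ⊓ W p → F p with the quotient map F p → F p ⧸ F (p+1) is a linear isomorphism; (3) the family of submodules (F p ⊓ W p)_{p ∈ ℤ} is independent and its supremum is ⊤ (i.e. V is the internal direct sum of the subspaces F p ⊓ W p); (4) there exists a family (V_p)_{p ∈ ℤ} of submodules of V such that V is the internal direct sum of the V_p and for every k ∈ ℤ, W k = ⨆_{p ≤ k} V_p and F k = ⨆_{p ≥ k} V_p. Moreover, when these conditions hold, in (4) one necessarily has V_p = F p ⊓ W p for every p. -/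

import Mathlib

section

variable {V : Type*} [AddCommGroup V] [Module ℂ V] (W F : ℤ → Submodule ℂ V)

/-- Condition (1): for every `p`, the composite of the inclusion `F p ⊓ W p → W p`
with the quotient map `W p → W p ⧸ W (p − 1)` is a linear isomorphism. -/
def Cond1 : Prop :=
  ∀ p : ℤ, Function.Bijective
    (((W (p - 1)).comap (W p).subtype).mkQ.comp
      (Submodule.inclusion (inf_le_right : F p ⊓ W p ≤ W p)))

/-- Condition (2): for every `p`, the composite of the inclusion `F p ⊓ W p → F p`
with the quotient map `F p → F p ⧸ F (p + 1)` is a linear isomorphism. -/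
def Cond2 : Prop :=
  ∀ p : ℤ, Function.Bijective
    (((F (p + 1)).comap (F p).subtype).mkQ.comp
      (Submodule.inclusion (inf_le_left : F p ⊓ W p ≤ F p)))

/-- Condition (3): `V` is the internal direct sum of the subspaces `F p ⊓ W p`. -/
def Cond3 : Prop :=
  iSupIndep (fun p : ℤ => F p ⊓ W p) ∧
    (⨆ p : ℤ, F p ⊓ W p) = ⊤

/-- Condition (4): there is a grading `(V_p)` of `V` splitting both filtrations. -/
def Cond4 : Prop :=
  ∃ Vp : ℤ → Submodule ℂ V,
    iSupIndep Vp ∧ (⨆ p : ℤ, Vp p) = ⊤ ∧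
      (∀ k : ℤ, W k = ⨆ p ≤ k, Vp p) ∧ (∀ k : ℤ, F k = ⨆ p ≥ k, Vp p)

end

set_option linter.unusedSectionVars false
set_option maxHeartbeats 1000000

namespace HTS

variable {V : Type*} [AddCommGroup V] [Module ℂ V]

open Submodule

lemma finsupp_split (f : ℤ →₀ V) (p : ℤ) :
    (∑ r ∈ f.support.erase p, f r) + f p = f.sum fun _ v => v := by
  classical
  by_cases hp : p ∈ f.support
  · rw [Finsupp.sum]; exact Finset.sum_erase_add _ _ hp
  · rw [Finset.erase_eq_of_notMem hp, Finsupp.notMem_support_iff.mp hp, add_zero, Finsupp.sum]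

lemma mem_biSup_exists {P : ℤ → Prop} [DecidablePred P] {G : ℤ → Submodule ℂ V} {x : V}
    (hx : x ∈ ⨆ q, ⨆ _ : P q, G q) :
    ∃ f : ℤ →₀ V, (∀ q, f q ∈ G q) ∧ (∀ q, ¬ P q → f q = 0) ∧ (f.sum fun _ v => v) = x := by
  have h : (⨆ q, ⨆ _ : P q, G q) = ⨆ q, (if P q then G q else ⊥) :=
    iSup_congr fun q => iSup_eq_if _
  rw [h, Submodule.mem_iSup_iff_exists_finsupp] at hx
  obtain ⟨f, hf, hsum⟩ := hx
  have h0 : ∀ q, ¬ P q → f q = 0 := fun q hq => by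
    have := hf q; rw [if_neg hq] at this; simpa using this
  refine ⟨f, fun q => ?_, h0, hsum⟩
  by_cases hq : P q
  · have := hf q; rwa [if_pos hq] at this
  · rw [h0 q hq]; exact zero_mem _

lemma L1 (W F : ℤ → Submodule ℂ V) (hWmono : Monotone W)
    (hInj : ∀ p : ℤ, F p ⊓ W (p - 1) = ⊥)
    (f : ℤ →₀ V) (hf : ∀ q, f q ∈ F q ⊓ W q) {k : ℤ}
    (hsum : (f.sum fun _ v => v) ∈ W k) : ∀ q, k < q → f q = 0 := by
  intro q hq
  by_contra hne
  have hqsupp : q ∈ f.support := Finsupp.mem_support_iff.2 hne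
  have hnemp : f.support.Nonempty := ⟨q, hqsupp⟩
  set m := f.support.max' hnemp with hm
  have hmax : ∀ r ∈ f.support, r ≤ m := fun r hr => f.support.le_max' r hr
  have hkm : k < m := lt_of_lt_of_le hq (hmax q hqsupp)
  have hmem : m ∈ f.support := f.support.max'_mem hnemp
  have h1 : (∑ r ∈ f.support.erase m, f r) ∈ W (m - 1) := by
    refine Submodule.sum_mem _ fun r hr => ?_
    have hrm : r ≠ m := Finset.ne_of_mem_erase hr
    have hrle : r ≤ m - 1 := by have := hmax r (Finset.mem_of_mem_erase hr); omega
    exact hWmono hrle (Submodule.mem_inf.mp (hf r)).2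
  have h2 : (f.sum fun _ v => v) ∈ W (m - 1) := hWmono (by omega) hsum
  have h3 : f m ∈ F m ⊓ W (m - 1) := by
    refine Submodule.mem_inf.mpr ⟨(Submodule.mem_inf.mp (hf m)).1, ?_⟩
    have hfm : f m = (f.sum fun _ v => v) - ∑ r ∈ f.support.erase m, f r := by
      rw [← finsupp_split f m]; abel
    rw [hfm]; exact sub_mem h2 h1
  rw [hInj m] at h3
  exact absurd ((Submodule.mem_bot _).1 h3) (Finsupp.mem_support_iff.1 hmem)

lemma L1' (W F : ℤ → Submodule ℂ V) (hFanti : Antitone F)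
    (hInj : ∀ p : ℤ, F p ⊓ W (p - 1) = ⊥)
    (f : ℤ →₀ V) (hf : ∀ q, f q ∈ F q ⊓ W q) {k : ℤ}
    (hsum : (f.sum fun _ v => v) ∈ F k) : ∀ q, q < k → f q = 0 := by
  intro q hq
  by_contra hne
  have hqsupp : q ∈ f.support := Finsupp.mem_support_iff.2 hne
  have hnemp : f.support.Nonempty := ⟨q, hqsupp⟩
  set m := f.support.min' hnemp with hm
  have hmin : ∀ r ∈ f.support, m ≤ r := fun r hr => f.support.min'_le r hr
  have hkm : m < k := lt_of_le_of_lt (hmin q hqsupp) hq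
  have hmem : m ∈ f.support := f.support.min'_mem hnemp
  have h1 : (∑ r ∈ f.support.erase m, f r) ∈ F (m + 1) := by
    refine Submodule.sum_mem _ fun r hr => ?_
    have hrm : r ≠ m := Finset.ne_of_mem_erase hr
    have hrle : m + 1 ≤ r := by have := hmin r (Finset.mem_of_mem_erase hr); omega
    exact hFanti hrle (Submodule.mem_inf.mp (hf r)).1
  have h2 : (f.sum fun _ v => v) ∈ F (m + 1) := hFanti (by omega) hsum
  have h3 : f m ∈ F (m + 1) ⊓ W ((m + 1) - 1) := by
    refine Submodule.mem_inf.mpr ⟨?_, by simpa using (Submodule.mem_inf.mp (hf m)).2⟩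
    have hfm : f m = (f.sum fun _ v => v) - ∑ r ∈ f.support.erase m, f r := by
      rw [← finsupp_split f m]; abel
    rw [hfm]; exact sub_mem h2 h1
  rw [hInj (m + 1)] at h3
  exact absurd ((Submodule.mem_bot _).1 h3) (Finsupp.mem_support_iff.1 hmem)


variable {V : Type*} [AddCommGroup V] [Module ℂ V]

open Submodule

lemma biSup_le_split (G : ℤ → Submodule ℂ V) (p : ℤ) :
    (⨆ q ≤ p, G q) = (⨆ q ≤ p - 1, G q) ⊔ G p := by
  apply le_antisymm
  · refine iSup₂_le fun q hq => ?_
    rcases eq_or_lt_of_le hq with rfl | h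
    · exact le_sup_right
    · exact le_trans (le_iSup₂ (f := fun q (_ : q ≤ p - 1) => G q) q (by omega)) le_sup_left
  · exact sup_le (iSup₂_le fun q hq => le_iSup₂ (f := fun q (_ : q ≤ p) => G q) q (by omega))
      (le_iSup₂ (f := fun q (_ : q ≤ p) => G q) p le_rfl)

lemma biSup_ge_split (G : ℤ → Submodule ℂ V) (p : ℤ) :
    (⨆ q ≥ p, G q) = G p ⊔ (⨆ q ≥ p + 1, G q) := by
  apply le_antisymm
  · refine iSup₂_le fun q hq => ?_
    rcases eq_or_lt_of_le hq with rfl | h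
    · exact le_sup_left
    · exact le_trans (le_iSup₂ (f := fun q (_ : q ≥ p + 1) => G q) q (by omega)) le_sup_right
  · exact sup_le (le_iSup₂ (f := fun q (_ : q ≥ p) => G q) p le_rfl)
      (iSup₂_le fun q hq => le_iSup₂ (f := fun q (_ : q ≥ p) => G q) q (by omega))

lemma inj_shift {W F : ℤ → Submodule ℂ V} (h : ∀ p : ℤ, F p ⊓ W (p - 1) = ⊥) :
    ∀ p : ℤ, F (p + 1) ⊓ W p = ⊥ := fun p => by simpa using h (p + 1)

lemma inj_unshift {W F : ℤ → Submodule ℂ V} (h : ∀ p : ℤ, F (p + 1) ⊓ W p = ⊥) :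
    ∀ p : ℤ, F p ⊓ W (p - 1) = ⊥ := fun p => by simpa using h (p - 1)


variable {V : Type*} [AddCommGroup V] [Module ℂ V]

open Submodule

lemma cond1_iff (W F : ℤ → Submodule ℂ V) (hWmono : Monotone W) :
    Cond1 W F ↔ (∀ p : ℤ, F p ⊓ W (p - 1) = ⊥) ∧ (∀ p : ℤ, W p = W (p - 1) ⊔ (F p ⊓ W p)) := by
  constructor
  · intro h
    constructor
    · intro p
      rw [eq_bot_iff]
      intro x hx
      obtain ⟨hxF, hxW⟩ := Submodule.mem_inf.mp hx
      have hxWp : x ∈ W p := hWmono (by omega) hxW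
      have hx0 : (⟨x, Submodule.mem_inf.mpr ⟨hxF, hxWp⟩⟩ : ↥(F p ⊓ W p)) = 0 := by
        apply (h p).injective
        rw [map_zero, LinearMap.comp_apply, Submodule.mkQ_apply, Submodule.Quotient.mk_eq_zero]
        exact Submodule.mem_comap.mpr (by simpa using hxW)
      simpa using congrArg Subtype.val hx0
    · intro p
      refine le_antisymm ?_ (sup_le (hWmono (by omega)) inf_le_right)
      intro y hy
      obtain ⟨z, hz⟩ := (h p).surjective (((W (p - 1)).comap (W p).subtype).mkQ ⟨y, hy⟩)
      rw [LinearMap.comp_apply, Submodule.mkQ_apply, Submodule.mkQ_apply,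
        Submodule.Quotient.eq] at hz
      have hz' : (z : V) - y ∈ W (p - 1) := by simpa using hz
      refine Submodule.mem_sup.mpr ⟨y - (z : V), ?_, (z : V), z.2, by abel⟩
      have : y - (z : V) = -((z : V) - y) := by abel
      rw [this]; exact neg_mem hz'
  · rintro ⟨hInj, hSurj⟩ p
    constructor
    · refine (injective_iff_map_eq_zero _).mpr fun x hx0 => ?_
      rw [LinearMap.comp_apply, Submodule.mkQ_apply, Submodule.Quotient.mk_eq_zero] at hx0
      have h1 : (x : V) ∈ W (p - 1) := by simpa using hx0
      have h2 : (x : V) ∈ F p ⊓ W (p - 1) :=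
        Submodule.mem_inf.mpr ⟨(Submodule.mem_inf.mp x.2).1, h1⟩
      rw [hInj p] at h2
      exact Subtype.ext (by simpa using h2)
    · intro z
      obtain ⟨y, rfl⟩ := Submodule.Quotient.mk_surjective _ z
      have hy : (y : V) ∈ W (p - 1) ⊔ (F p ⊓ W p) := (hSurj p) ▸ y.2
      obtain ⟨w, hw, v, hv, hyv⟩ := Submodule.mem_sup.mp hy
      refine ⟨⟨v, hv⟩, ?_⟩
      rw [LinearMap.comp_apply, Submodule.mkQ_apply, Submodule.Quotient.eq]
      refine Submodule.mem_comap.mpr ?_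
      have : v - (y : V) = -w := by rw [← hyv]; abel
      simpa [this] using neg_mem hw

lemma cond2_iff (W F : ℤ → Submodule ℂ V) (hFanti : Antitone F) :
    Cond2 W F ↔ (∀ p : ℤ, F (p + 1) ⊓ W p = ⊥) ∧ (∀ p : ℤ, F p = F (p + 1) ⊔ (F p ⊓ W p)) := by
  constructor
  · intro h
    constructor
    · intro p
      rw [eq_bot_iff]
      intro x hx
      obtain ⟨hxF, hxW⟩ := Submodule.mem_inf.mp hx
      have hxFp : x ∈ F p := hFanti (by omega) hxF
      have hx0 : (⟨x, Submodule.mem_inf.mpr ⟨hxFp, hxW⟩⟩ : ↥(F p ⊓ W p)) = 0 := by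
        apply (h p).injective
        rw [map_zero, LinearMap.comp_apply, Submodule.mkQ_apply, Submodule.Quotient.mk_eq_zero]
        exact Submodule.mem_comap.mpr (by simpa using hxF)
      simpa using congrArg Subtype.val hx0
    · intro p
      refine le_antisymm ?_ (sup_le (hFanti (by omega)) inf_le_left)
      intro y hy
      obtain ⟨z, hz⟩ := (h p).surjective (((F (p + 1)).comap (F p).subtype).mkQ ⟨y, hy⟩)
      rw [LinearMap.comp_apply, Submodule.mkQ_apply, Submodule.mkQ_apply,
        Submodule.Quotient.eq] at hz
      have hz' : (z : V) - y ∈ F (p + 1) := by simpa using hz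
      refine Submodule.mem_sup.mpr ⟨y - (z : V), ?_, (z : V), z.2, by abel⟩
      have : y - (z : V) = -((z : V) - y) := by abel
      rw [this]; exact neg_mem hz'
  · rintro ⟨hInj, hSurj⟩ p
    constructor
    · refine (injective_iff_map_eq_zero _).mpr fun x hx0 => ?_
      rw [LinearMap.comp_apply, Submodule.mkQ_apply, Submodule.Quotient.mk_eq_zero] at hx0
      have h1 : (x : V) ∈ F (p + 1) := by simpa using hx0
      have h2 : (x : V) ∈ F (p + 1) ⊓ W p :=
        Submodule.mem_inf.mpr ⟨h1, (Submodule.mem_inf.mp x.2).2⟩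
      rw [hInj p] at h2
      exact Subtype.ext (by simpa using h2)
    · intro z
      obtain ⟨y, rfl⟩ := Submodule.Quotient.mk_surjective _ z
      have hy : (y : V) ∈ F (p + 1) ⊔ (F p ⊓ W p) := (hSurj p) ▸ y.2
      obtain ⟨w, hw, v, hv, hyv⟩ := Submodule.mem_sup.mp hy
      refine ⟨⟨v, hv⟩, ?_⟩
      rw [LinearMap.comp_apply, Submodule.mkQ_apply, Submodule.Quotient.eq]
      refine Submodule.mem_comap.mpr ?_
      have : v - (y : V) = -w := by rw [← hyv]; abel
      simpa [this] using neg_mem hw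


variable {V : Type*} [AddCommGroup V] [Module ℂ V]

open Submodule


/-- Cond1-data implies the full Cond4 package for the family `fun p => F p ⊓ W p`. -/
lemma cond4_of_injSurjW (W F : ℤ → Submodule ℂ V) (hWmono : Monotone W) (hFanti : Antitone F)
    (hWbot : ∃ a : ℤ, ∀ n ≤ a, W n = ⊥) (hWtop : ∃ b : ℤ, ∀ n, b ≤ n → W n = ⊤)
    (hInj : ∀ p : ℤ, F p ⊓ W (p - 1) = ⊥)
    (hSurj : ∀ p : ℤ, W p = W (p - 1) ⊔ (F p ⊓ W p)) :
    iSupIndep (fun p : ℤ => F p ⊓ W p) ∧ (⨆ p : ℤ, F p ⊓ W p) = ⊤ ∧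
      (∀ k : ℤ, W k = ⨆ p ≤ k, F p ⊓ W p) ∧ (∀ k : ℤ, F k = ⨆ p ≥ k, F p ⊓ W p) := by
  classical
  have hWf : ∀ k : ℤ, W k = ⨆ p ≤ k, F p ⊓ W p := by
    obtain ⟨a, ha⟩ := hWbot
    have key : ∀ k, a ≤ k → W k ≤ ⨆ p ≤ k, F p ⊓ W p := by
      intro k
      refine Int.le_induction (motive := fun k _ => W k ≤ ⨆ p ≤ k, F p ⊓ W p) ?_ ?_ k
      · show W a ≤ _; rw [ha a le_rfl]; exact bot_le
      · intro n hn ih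
        show W (n+1) ≤ _
        have hs := hSurj (n + 1)
        rw [show n + 1 - 1 = n by omega] at hs
        rw [hs]
        refine sup_le (ih.trans ?_) (le_iSup₂ (f := fun q (_ : q ≤ n + 1) => F q ⊓ W q) (n + 1) le_rfl)
        exact iSup₂_le fun q hq => le_iSup₂ (f := fun q (_ : q ≤ n + 1) => F q ⊓ W q) q (by omega)
    intro k
    refine le_antisymm ?_ (iSup₂_le fun q hq => inf_le_right.trans (hWmono hq))
    rcases le_or_gt a k with h | h
    · exact key k h
    · rw [ha k (by omega)]; exact bot_le
  have hTop : (⨆ p : ℤ, F p ⊓ W p) = ⊤ := by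
    obtain ⟨b, hb⟩ := hWtop
    refine top_unique ?_
    rw [← hb b le_rfl, hWf b]
    exact iSup₂_le fun q _ => le_iSup (fun p => F p ⊓ W p) q
  have hFf : ∀ k : ℤ, F k = ⨆ p ≥ k, F p ⊓ W p := by
    intro k
    refine le_antisymm ?_ (iSup₂_le fun q hq => inf_le_left.trans (hFanti hq))
    intro x hx
    have hx' : x ∈ ⨆ p : ℤ, F p ⊓ W p := by rw [hTop]; trivial
    rw [Submodule.mem_iSup_iff_exists_finsupp] at hx'
    obtain ⟨f, hf, hsum⟩ := hx'
    have hz := L1' W F hFanti hInj f hf (k := k) (by rw [hsum]; exact hx)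
    rw [← hsum, Finsupp.sum]
    refine Submodule.sum_mem _ fun r hr => ?_
    have hrk : k ≤ r := by
      by_contra h
      exact Finsupp.mem_support_iff.1 hr (hz r (by omega))
    exact Submodule.mem_iSup_of_mem r (Submodule.mem_iSup_of_mem hrk (hf r))
  have hIndep : iSupIndep (fun p : ℤ => F p ⊓ W p) := by
    intro p
    rw [Submodule.disjoint_def]
    intro x hxp hxsup
    obtain ⟨f, hf, hfP, hsum⟩ := mem_biSup_exists (P := fun q => q ≠ p) hxsup
    have hxW : x ∈ W p := (Submodule.mem_inf.mp hxp).2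
    have hz := L1 W F hWmono hInj f hf (k := p) (by rw [hsum]; exact hxW)
    have hxW' : x ∈ W (p - 1) := by
      rw [← hsum, Finsupp.sum]
      refine Submodule.sum_mem _ fun r hr => ?_
      have hrp : r ≠ p := by
        intro h; exact Finsupp.mem_support_iff.1 hr (hfP r (by simp [h]))
      have hrle : r ≤ p - 1 := by
        by_contra h
        exact Finsupp.mem_support_iff.1 hr (hz r (by omega))
      exact hWmono hrle (Submodule.mem_inf.mp (hf r)).2
    have : x ∈ F p ⊓ W (p - 1) :=
      Submodule.mem_inf.mpr ⟨(Submodule.mem_inf.mp hxp).1, hxW'⟩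
    rw [hInj p] at this
    exact (Submodule.mem_bot _).1 this
  exact ⟨hIndep, hTop, hWf, hFf⟩

/-- Cond2-data implies the full Cond4 package for the family `fun p => F p ⊓ W p`. -/
lemma cond4_of_injSurjF (W F : ℤ → Submodule ℂ V) (hWmono : Monotone W) (hFanti : Antitone F)
    (hFtop : ∃ a : ℤ, ∀ n ≤ a, F n = ⊤) (hFbot : ∃ b : ℤ, ∀ n, b ≤ n → F n = ⊥)
    (hInj : ∀ p : ℤ, F p ⊓ W (p - 1) = ⊥)
    (hSurj : ∀ p : ℤ, F p = F (p + 1) ⊔ (F p ⊓ W p)) :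
    iSupIndep (fun p : ℤ => F p ⊓ W p) ∧ (⨆ p : ℤ, F p ⊓ W p) = ⊤ ∧
      (∀ k : ℤ, W k = ⨆ p ≤ k, F p ⊓ W p) ∧ (∀ k : ℤ, F k = ⨆ p ≥ k, F p ⊓ W p) := by
  classical
  have hFf : ∀ k : ℤ, F k = ⨆ p ≥ k, F p ⊓ W p := by
    obtain ⟨b, hb⟩ := hFbot
    have key : ∀ k ≤ b, F k ≤ ⨆ p ≥ k, F p ⊓ W p := by
      intro k
      refine Int.le_induction_down (motive := fun k _ => F k ≤ ⨆ p ≥ k, F p ⊓ W p) ?_ ?_ k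
      · show F b ≤ _; rw [hb b le_rfl]; exact bot_le
      · intro n hn ih
        show F (n-1) ≤ _
        have hs := hSurj (n - 1)
        rw [show n - 1 + 1 = n by omega] at hs
        rw [hs]
        refine sup_le (ih.trans ?_) (le_iSup₂ (f := fun q (_ : q ≥ n - 1) => F q ⊓ W q) (n - 1) le_rfl)
        exact iSup₂_le fun q hq => le_iSup₂ (f := fun q (_ : q ≥ n - 1) => F q ⊓ W q) q (by omega)
    intro k
    refine le_antisymm ?_ (iSup₂_le fun q hq => inf_le_left.trans (hFanti hq))
    rcases le_or_gt k b with h | h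
    · exact key k h
    · rw [hb k (by omega)]; exact bot_le
  have hTop : (⨆ p : ℤ, F p ⊓ W p) = ⊤ := by
    obtain ⟨a, ha⟩ := hFtop
    refine top_unique ?_
    rw [← ha a le_rfl, hFf a]
    exact iSup₂_le fun q _ => le_iSup (fun p => F p ⊓ W p) q
  have hWf : ∀ k : ℤ, W k = ⨆ p ≤ k, F p ⊓ W p := by
    intro k
    refine le_antisymm ?_ (iSup₂_le fun q hq => inf_le_right.trans (hWmono hq))
    intro x hx
    have hx' : x ∈ ⨆ p : ℤ, F p ⊓ W p := by rw [hTop]; trivial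
    rw [Submodule.mem_iSup_iff_exists_finsupp] at hx'
    obtain ⟨f, hf, hsum⟩ := hx'
    have hz := L1 W F hWmono hInj f hf (k := k) (by rw [hsum]; exact hx)
    rw [← hsum, Finsupp.sum]
    refine Submodule.sum_mem _ fun r hr => ?_
    have hrk : r ≤ k := by
      by_contra h
      exact Finsupp.mem_support_iff.1 hr (hz r (by omega))
    exact Submodule.mem_iSup_of_mem r (Submodule.mem_iSup_of_mem hrk (hf r))
  have hIndep : iSupIndep (fun p : ℤ => F p ⊓ W p) := by
    intro p
    rw [Submodule.disjoint_def]
    intro x hxp hxsup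
    obtain ⟨f, hf, hfP, hsum⟩ := mem_biSup_exists (P := fun q => q ≠ p) hxsup
    have hxF : x ∈ F p := (Submodule.mem_inf.mp hxp).1
    have hz := L1' W F hFanti hInj f hf (k := p) (by rw [hsum]; exact hxF)
    have hxF' : x ∈ F (p + 1) := by
      rw [← hsum, Finsupp.sum]
      refine Submodule.sum_mem _ fun r hr => ?_
      have hrp : r ≠ p := by
        intro h; exact Finsupp.mem_support_iff.1 hr (hfP r (by simp [h]))
      have hrle : p + 1 ≤ r := by
        by_contra h
        exact Finsupp.mem_support_iff.1 hr (hz r (by omega))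
      exact hFanti hrle (Submodule.mem_inf.mp (hf r)).1
    have : x ∈ F (p + 1) ⊓ W p :=
      Submodule.mem_inf.mpr ⟨hxF', (Submodule.mem_inf.mp hxp).2⟩
    rw [inj_shift hInj p] at this
    exact (Submodule.mem_bot _).1 this
  exact ⟨hIndep, hTop, hWf, hFf⟩

/-- Any Cond4 grading forces the injectivity condition. -/
lemma inj_of_cond4 (W F : ℤ → Submodule ℂ V) (hFanti : Antitone F)
    (Vp : ℤ → Submodule ℂ V) (hindep : iSupIndep Vp)
    (hW : ∀ k : ℤ, W k = ⨆ p ≤ k, Vp p) (hF : ∀ k : ℤ, F k = ⨆ p ≥ k, Vp p) :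
    ∀ p : ℤ, F p ⊓ W (p - 1) = ⊥ := by
  classical
  have hVF : ∀ q : ℤ, Vp q ≤ F q := fun q => by
    rw [hF q]; exact le_iSup₂ (f := fun p (_ : p ≥ q) => Vp p) q le_rfl
  intro p
  rw [eq_bot_iff]
  intro x hx
  obtain ⟨hxF, hxW⟩ := Submodule.mem_inf.mp hx
  rw [hW (p - 1)] at hxW
  obtain ⟨f, hfG, hfP, hsum⟩ := mem_biSup_exists (P := fun q => q ≤ p - 1) hxW
  by_cases hne : f.support.Nonempty
  · exfalso
    set m := f.support.min' hne with hmdef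
    have hmem : m ∈ f.support := f.support.min'_mem hne
    have hmin : ∀ r ∈ f.support, m ≤ r := fun r hr => f.support.min'_le r hr
    have hmp : m ≤ p - 1 := by
      by_contra h
      exact Finsupp.mem_support_iff.1 hmem (hfP m (by omega))
    have h1 : (∑ r ∈ f.support.erase m, f r) ∈ F (m + 1) := by
      refine Submodule.sum_mem _ fun r hr => ?_
      have hrm : r ≠ m := Finset.ne_of_mem_erase hr
      have : m + 1 ≤ r := by have := hmin r (Finset.mem_of_mem_erase hr); omega
      exact hFanti this (hVF r (hfG r))
    have h2 : x ∈ F (m + 1) := hFanti (by omega) hxF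
    have hfm : f m = x - ∑ r ∈ f.support.erase m, f r := by
      rw [← hsum, ← finsupp_split f m]; abel
    have h3F : f m ∈ F (m + 1) := by rw [hfm]; exact sub_mem h2 h1
    have h4 : F (m + 1) ≤ ⨆ q, ⨆ _ : q ≠ m, Vp q := by
      rw [hF (m + 1)]
      exact iSup₂_le fun q hq => le_iSup₂ (f := fun q (_ : q ≠ m) => Vp q) q (by omega)
    have h5 : f m = 0 := Submodule.disjoint_def.mp (hindep m) (f m) (hfG m) (h4 h3F)
    exact Finsupp.mem_support_iff.1 hmem h5
  · rw [Finset.not_nonempty_iff_eq_empty] at hne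
    rw [← hsum, Finsupp.sum, hne, Finset.sum_empty]
    exact zero_mem _

/-- Uniqueness: any Cond4 grading is `fun p => F p ⊓ W p`. -/
lemma eq_of_cond4 (W F : ℤ → Submodule ℂ V) (hWmono : Monotone W) (hFanti : Antitone F)
    (Vp : ℤ → Submodule ℂ V) (hindep : iSupIndep Vp) (htop : (⨆ p : ℤ, Vp p) = ⊤)
    (hW : ∀ k : ℤ, W k = ⨆ p ≤ k, Vp p) (hF : ∀ k : ℤ, F k = ⨆ p ≥ k, Vp p) :
    ∀ p : ℤ, Vp p = F p ⊓ W p := by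
  classical
  have hInj := inj_of_cond4 W F hFanti Vp hindep hW hF
  have hVF : ∀ q : ℤ, Vp q ≤ F q := fun q => by
    rw [hF q]; exact le_iSup₂ (f := fun p (_ : p ≥ q) => Vp p) q le_rfl
  have hVW : ∀ q : ℤ, Vp q ≤ W q := fun q => by
    rw [hW q]; exact le_iSup₂ (f := fun p (_ : p ≤ q) => Vp p) q le_rfl
  intro p
  refine le_antisymm (le_inf (hVF p) (hVW p)) ?_
  intro x hx
  obtain ⟨hxF, hxW⟩ := Submodule.mem_inf.mp hx
  have hx' : x ∈ ⨆ q : ℤ, Vp q := by rw [htop]; trivial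
  rw [Submodule.mem_iSup_iff_exists_finsupp] at hx'
  obtain ⟨f, hfG, hsum⟩ := hx'
  have hfFW : ∀ q, f q ∈ F q ⊓ W q := fun q =>
    Submodule.mem_inf.mpr ⟨hVF q (hfG q), hVW q (hfG q)⟩
  have h1 := L1 W F hWmono hInj f hfFW (k := p) (by rw [hsum]; exact hxW)
  have h2 := L1' W F hFanti hInj f hfFW (k := p) (by rw [hsum]; exact hxF)
  have hxfp : x = f p := by
    rw [← hsum]
    refine Finsupp.sum_eq_single p (fun b hb hbp => ?_) (fun _ => rfl)
    rcases lt_or_gt_of_ne hbp with h | h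
    · exact h2 b h
    · exact h1 b h
  rw [hxfp]
  exact hfG p

/-- Any Cond4 grading forces both surjectivity conditions. -/
lemma surjs_of_cond4 (W F : ℤ → Submodule ℂ V) (hWmono : Monotone W) (hFanti : Antitone F)
    (Vp : ℤ → Submodule ℂ V) (hindep : iSupIndep Vp) (htop : (⨆ p : ℤ, Vp p) = ⊤)
    (hW : ∀ k : ℤ, W k = ⨆ p ≤ k, Vp p) (hF : ∀ k : ℤ, F k = ⨆ p ≥ k, Vp p) :
    (∀ p : ℤ, W p = W (p - 1) ⊔ (F p ⊓ W p)) ∧ (∀ p : ℤ, F p = F (p + 1) ⊔ (F p ⊓ W p)) := by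
  have huniq := eq_of_cond4 W F hWmono hFanti Vp hindep htop hW hF
  constructor
  · intro p
    have h := biSup_le_split Vp p
    rw [← hW p, ← hW (p - 1), huniq p] at h
    exact h
  · intro p
    have h := biSup_ge_split Vp p
    rw [← hF p, ← hF (p + 1), huniq p] at h
    rw [sup_comm] at h
    exact h

end HTS

theorem hodge_tate_splitting_tfae (V : Type*) [AddCommGroup V] [Module ℂ V]
    [FiniteDimensional ℂ V]
    (W : ℤ → Submodule ℂ V) (hWmono : Monotone W)
    (hWbot : ∃ a : ℤ, ∀ n ≤ a, W n = ⊥) (hWtop : ∃ b : ℤ, ∀ n, b ≤ n → W n = ⊤)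
    (F : ℤ → Submodule ℂ V) (hFanti : Antitone F)
    (hFtop : ∃ a : ℤ, ∀ n ≤ a, F n = ⊤) (hFbot : ∃ b : ℤ, ∀ n, b ≤ n → F n = ⊥) :
    (Cond1 W F ↔ Cond2 W F) ∧ (Cond1 W F ↔ Cond3 W F) ∧ (Cond1 W F ↔ Cond4 W F) ∧
      (∀ Vp : ℤ → Submodule ℂ V,
        iSupIndep Vp → (⨆ p : ℤ, Vp p) = ⊤ →
        (∀ k : ℤ, W k = ⨆ p ≤ k, Vp p) → (∀ k : ℤ, F k = ⨆ p ≥ k, Vp p) →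
        ∀ p : ℤ, Vp p = F p ⊓ W p) := by
  classical
  have hA := HTS.cond1_iff W F hWmono
  have hB := HTS.cond2_iff W F hFanti
  have h14 : Cond1 W F → Cond4 W F := by
    intro h
    obtain ⟨hI, hS⟩ := hA.mp h
    obtain ⟨h1, h2, h3, h4⟩ := HTS.cond4_of_injSurjW W F hWmono hFanti hWbot hWtop hI hS
    exact ⟨_, h1, h2, h3, h4⟩
  have h24 : Cond2 W F → Cond4 W F := by
    intro h
    obtain ⟨hI, hS⟩ := hB.mp h
    obtain ⟨h1, h2, h3, h4⟩ :=
      HTS.cond4_of_injSurjF W F hWmono hFanti hFtop hFbot (HTS.inj_unshift hI) hS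
    exact ⟨_, h1, h2, h3, h4⟩
  have h41 : Cond4 W F → Cond1 W F := by
    rintro ⟨Vp, hi, ht, hWk, hFk⟩
    exact hA.mpr ⟨HTS.inj_of_cond4 W F hFanti Vp hi hWk hFk,
      (HTS.surjs_of_cond4 W F hWmono hFanti Vp hi ht hWk hFk).1⟩
  have h42 : Cond4 W F → Cond2 W F := by
    rintro ⟨Vp, hi, ht, hWk, hFk⟩
    exact hB.mpr ⟨HTS.inj_shift (HTS.inj_of_cond4 W F hFanti Vp hi hWk hFk),
      (HTS.surjs_of_cond4 W F hWmono hFanti Vp hi ht hWk hFk).2⟩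
  have h13 : Cond1 W F → Cond3 W F := by
    intro h
    obtain ⟨hI, hS⟩ := hA.mp h
    obtain ⟨h1, h2, _, _⟩ := HTS.cond4_of_injSurjW W F hWmono hFanti hWbot hWtop hI hS
    exact ⟨h1, h2⟩
  have h31 : Cond3 W F → Cond1 W F := by
    rintro ⟨hindep, htop⟩
    have hI : ∀ p : ℤ, F p ⊓ W (p - 1) = ⊥ := by
      intro p
      rw [eq_bot_iff]
      intro x hx
      obtain ⟨hxF, hxW⟩ := Submodule.mem_inf.mp hx
      have hx1 : x ∈ F p ⊓ W p := Submodule.mem_inf.mpr ⟨hxF, hWmono (by omega) hxW⟩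
      have hx2 : x ∈ F (p - 1) ⊓ W (p - 1) :=
        Submodule.mem_inf.mpr ⟨hFanti (by omega) hxF, hxW⟩
      have hd : Disjoint (F p ⊓ W p) (F (p - 1) ⊓ W (p - 1)) :=
        hindep.pairwiseDisjoint (show (p : ℤ) ≠ p - 1 by omega)
      exact (Submodule.mem_bot ℂ).2 (Submodule.disjoint_def.mp hd x hx1 hx2)
    refine hA.mpr ⟨hI, fun p => ?_⟩
    refine le_antisymm ?_ (sup_le (hWmono (by omega)) inf_le_right)
    intro x hx
    have hx2 : x ∈ ⨆ q : ℤ, F q ⊓ W q := by rw [htop]; trivial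
    rw [Submodule.mem_iSup_iff_exists_finsupp] at hx2
    obtain ⟨f, hf, hsum⟩ := hx2
    have hz := HTS.L1 W F hWmono hI f hf (k := p) (by rw [hsum]; exact hx)
    refine Submodule.mem_sup.mpr ⟨∑ r ∈ f.support.erase p, f r, ?_, f p, hf p, ?_⟩
    · refine Submodule.sum_mem _ fun r hr => ?_
      have hrp : r ≠ p := Finset.ne_of_mem_erase hr
      have hrle : r ≤ p - 1 := by
        by_contra hc
        exact Finsupp.mem_support_iff.1 (Finset.mem_of_mem_erase hr) (hz r (by omega))
      exact hWmono hrle (Submodule.mem_inf.mp (hf r)).2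
    · exact (HTS.finsupp_split f p).trans hsum
  refine ⟨⟨fun h => h42 (h14 h), fun h => h41 (h24 h)⟩, ⟨h13, h31⟩, ⟨h14, h41⟩, ?_⟩
  intro Vp hi ht hWk hFk p
  exact HTS.eq_of_cond4 W F hWmono hFanti Vp hi ht hWk hFk p
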